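/- arXiv:1109.0503 — 2 statements merged into one kernel-verified Lean document; each statement's English description precedes it below -/
import Mathlib

section
/- Let n ≥ 1 and let J : ℝⁿ → (ℝⁿ →L[ℝ] ℝⁿ) be a twice continuously differentiable field of endomorphisms with J(x)² = −id for every x, whose Nijenhuis expression vanishes identically: for all x and all u, w ∈ ℝⁿ, (DJ)(x)(J(x)u)(w) − (DJ)(x)(J(x)w)(u) − J(x)((DJ)(x)(u)(w)) + J(x)((DJ)(x)(w)(u)) = 0. Writing J_k^l(x) = ⟨J(x) e_k, e_l⟩ for the components in the standard basis and ∂_p for the partial derivative in direction e_p (with the summation convention over repeated indices, indices raised and lowered with the standard Euclidean metric), the following identity holds for all x and all j, l: ∑_k ∂_k ∂_j J_k^l − ∑_k ∂_k ∂_k J_j^l + ∑_k ∂_k [ J_i^l J_j^p ∂_p J_k^i − J_i^l J_k^p ∂_p J_j^i ] = 0. (This is the identity 0 = D^k( J_i^l N_{jk}^i ) = D^k D_j J_k^l − D^k D_k J_j^l + D^k[ J_i^l J_j^p D_p J_k^i − J_i^l J_k^p D_p J_j^i ], specialized to flat space, used in the proof of Proposition 3.2 to replace D^k D_j J_k^l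 by the rough Laplacian of J.) -/
/-- Partial derivative in the direction of the `p`-th standard basis vector. -/
noncomputable def pd {n : ℕ} (p : Fin n)
    (f : EuclideanSpace ℝ (Fin n) → ℝ) (x : EuclideanSpace ℝ (Fin n)) : ℝ :=
  fderiv ℝ f x (EuclideanSpace.single p 1)

/-- The component `J_k^l(x) = ⟨J(x) e_k, e_l⟩` of a field of endomorphisms. -/
noncomputable def Jc {n : ℕ}
    (J : EuclideanSpace ℝ (Fin n) → (EuclideanSpace ℝ (Fin n) →L[ℝ] EuclideanSpace ℝ (Fin n)))
    (k l : Fin n) (x : EuclideanSpace ℝ (Fin n)) : ℝ :=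
  J x (EuclideanSpace.single k 1) l

theorem vec_expand {n : ℕ} (v : EuclideanSpace ℝ (Fin n)) :
    v = ∑ i, v i • EuclideanSpace.single i 1 := by
  ext q
  have : (∑ i, v i • EuclideanSpace.single i 1) q
      = ∑ i, (v i • EuclideanSpace.single i 1 : EuclideanSpace ℝ (Fin n)) q :=
    by rw [WithLp.ofLp_sum]; exact Finset.sum_apply q Finset.univ _
  rw [this]
  simp [EuclideanSpace.single_apply]

theorem clm_expand {n : ℕ} {F : Type*} [NormedAddCommGroup F] [NormedSpace ℝ F]
    (A : EuclideanSpace ℝ (Fin n) →L[ℝ] F) (v : EuclideanSpace ℝ (Fin n)) :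
    A v = ∑ i, v i • A (EuclideanSpace.single i 1) := by
  conv_lhs => rw [vec_expand v]
  rw [map_sum]
  simp

theorem Jy_apply {n : ℕ}
    (J : EuclideanSpace ℝ (Fin n) → (EuclideanSpace ℝ (Fin n) →L[ℝ] EuclideanSpace ℝ (Fin n)))
    (y v : EuclideanSpace ℝ (Fin n)) (l : Fin n) :
    J y v l = ∑ i, v i * Jc J i l y := by
  conv_lhs => rw [clm_expand (J y) v]
  have : (∑ i, v i • J y (EuclideanSpace.single i 1)) l
      = ∑ i, (v i • J y (EuclideanSpace.single i 1) : EuclideanSpace ℝ (Fin n)) l :=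
    by rw [WithLp.ofLp_sum]; exact Finset.sum_apply l Finset.univ _
  rw [this]
  rfl

theorem pd_jc {n : ℕ}
    (J : EuclideanSpace ℝ (Fin n) → (EuclideanSpace ℝ (Fin n) →L[ℝ] EuclideanSpace ℝ (Fin n)))
    (hJd : Differentiable ℝ J) (p k i : Fin n) (y : EuclideanSpace ℝ (Fin n)) :
    pd p (Jc J k i) y
      = fderiv ℝ J y (EuclideanSpace.single p 1) (EuclideanSpace.single k 1) i := by
  have hL : Jc J k i = fun y =>
      ((EuclideanSpace.proj i).comp
        (ContinuousLinearMap.apply ℝ (EuclideanSpace ℝ (Fin n)) (EuclideanSpace.single k 1 : EuclideanSpace ℝ (Fin n)))) (J y) := rfl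
  set L := (EuclideanSpace.proj i).comp
      (ContinuousLinearMap.apply ℝ (EuclideanSpace ℝ (Fin n)) (EuclideanSpace.single k 1 : EuclideanSpace ℝ (Fin n))) with hLdef
  have hcomp : (fun y => L (J y)) = L ∘ J := rfl
  unfold pd
  rw [hL, hcomp, (L.hasFDerivAt.comp y (hJd y).hasFDerivAt).fderiv]
  rfl

theorem D_apply {n : ℕ}
    (J : EuclideanSpace ℝ (Fin n) → (EuclideanSpace ℝ (Fin n) →L[ℝ] EuclideanSpace ℝ (Fin n)))
    (hJd : Differentiable ℝ J) (y v : EuclideanSpace ℝ (Fin n)) (k i : Fin n) :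
    fderiv ℝ J y v (EuclideanSpace.single k 1) i = ∑ p, v p * pd p (Jc J k i) y := by
  conv_lhs => rw [clm_expand (fderiv ℝ J y) v]
  rw [ContinuousLinearMap.sum_apply]
  have : (∑ p, (v p • fderiv ℝ J y (EuclideanSpace.single p 1))
        (EuclideanSpace.single k 1)) i
      = ∑ p, ((v p • fderiv ℝ J y (EuclideanSpace.single p 1))
        (EuclideanSpace.single k 1) : EuclideanSpace ℝ (Fin n)) i :=
    by rw [WithLp.ofLp_sum]; exact Finset.sum_apply i Finset.univ _
  rw [this]
  refine Finset.sum_congr rfl fun p _ => ?_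
  rw [pd_jc J hJd]
  rfl

theorem contDiff_jc {n : ℕ}
    (J : EuclideanSpace ℝ (Fin n) → (EuclideanSpace ℝ (Fin n) →L[ℝ] EuclideanSpace ℝ (Fin n)))
    (hC2 : ContDiff ℝ 2 J) (k i : Fin n) : ContDiff ℝ 2 (Jc J k i) := by
  have heq : Jc J k i = fun y =>
      ((EuclideanSpace.proj i).comp
        (ContinuousLinearMap.apply ℝ (EuclideanSpace ℝ (Fin n))
          (EuclideanSpace.single k 1 : EuclideanSpace ℝ (Fin n)))) (J y) := rfl
  rw [heq]
  exact (ContinuousLinearMap.contDiff _).comp hC2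

theorem contDiff_pd_jc {n : ℕ}
    (J : EuclideanSpace ℝ (Fin n) → (EuclideanSpace ℝ (Fin n) →L[ℝ] EuclideanSpace ℝ (Fin n)))
    (hC2 : ContDiff ℝ 2 J) (p k i : Fin n) : ContDiff ℝ 1 (pd p (Jc J k i)) := by
  have hJd : Differentiable ℝ J := hC2.differentiable (by norm_num)
  have heq : pd p (Jc J k i) = fun y =>
      (((EuclideanSpace.proj i).comp
        (ContinuousLinearMap.apply ℝ (EuclideanSpace ℝ (Fin n))
          (EuclideanSpace.single k 1 : EuclideanSpace ℝ (Fin n)))).comp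
        (ContinuousLinearMap.apply ℝ
          (EuclideanSpace ℝ (Fin n) →L[ℝ] EuclideanSpace ℝ (Fin n))
          (EuclideanSpace.single p 1 : EuclideanSpace ℝ (Fin n)))) (fderiv ℝ J y) := by
    funext y
    rw [pd_jc J hJd]
    rfl
  rw [heq]
  exact (ContinuousLinearMap.contDiff _).comp (hC2.fderiv_right (by norm_num))

theorem key {n : ℕ}
    (J : EuclideanSpace ℝ (Fin n) → (EuclideanSpace ℝ (Fin n) →L[ℝ] EuclideanSpace ℝ (Fin n)))
    (hC2 : ContDiff ℝ 2 J)
    (hJ2 : ∀ x, (J x).comp (J x) = -ContinuousLinearMap.id ℝ (EuclideanSpace ℝ (Fin n)))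
    (hN : ∀ (x u w : EuclideanSpace ℝ (Fin n)),
      fderiv ℝ J x (J x u) w - fderiv ℝ J x (J x w) u
        - J x (fderiv ℝ J x u w) + J x (fderiv ℝ J x w u) = 0)
    (y : EuclideanSpace ℝ (Fin n)) (j k l : Fin n) :
    pd j (Jc J k l) y - pd k (Jc J j l) y
      + ((∑ i, ∑ p, Jc J i l y * Jc J j p y * pd p (Jc J k i) y)
         - ∑ i, ∑ p, Jc J i l y * Jc J k p y * pd p (Jc J j i) y) = 0 := by
  have hJd : Differentiable ℝ J := hC2.differentiable (by norm_num)
  have hJJ : ∀ v : EuclideanSpace ℝ (Fin n), J y (J y v) = -v := by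
    intro v
    have := congrArg (fun A : EuclideanSpace ℝ (Fin n) →L[ℝ] EuclideanSpace ℝ (Fin n) => A v) (hJ2 y)
    simpa using this
  have hNe := hN y (EuclideanSpace.single j 1) (EuclideanSpace.single k 1)
  have h1 : J y (fderiv ℝ J y (J y (EuclideanSpace.single j 1)) (EuclideanSpace.single k 1))
      - J y (fderiv ℝ J y (J y (EuclideanSpace.single k 1)) (EuclideanSpace.single j 1))
      + fderiv ℝ J y (EuclideanSpace.single j 1) (EuclideanSpace.single k 1)
      - fderiv ℝ J y (EuclideanSpace.single k 1) (EuclideanSpace.single j 1) = 0 := by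
    have h := congrArg (J y) hNe
    rw [map_add, map_sub, map_sub, map_zero, hJJ, hJJ] at h
    rw [← h]
    abel
  have h2 := congrArg (fun v : EuclideanSpace ℝ (Fin n) => v l) h1
  simp only [PiLp.sub_apply, PiLp.add_apply, PiLp.zero_apply] at h2
  have e1 : J y (fderiv ℝ J y (J y (EuclideanSpace.single j 1)) (EuclideanSpace.single k 1)) l
      = ∑ i, ∑ p, Jc J i l y * Jc J j p y * pd p (Jc J k i) y := by
    rw [Jy_apply]
    refine Finset.sum_congr rfl fun i _ => ?_
    rw [D_apply J hJd, Finset.sum_mul]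
    refine Finset.sum_congr rfl fun p _ => ?_
    have hjp : (J y (EuclideanSpace.single j 1)) p = Jc J j p y := rfl
    rw [hjp]; ring
  have e2 : J y (fderiv ℝ J y (J y (EuclideanSpace.single k 1)) (EuclideanSpace.single j 1)) l
      = ∑ i, ∑ p, Jc J i l y * Jc J k p y * pd p (Jc J j i) y := by
    rw [Jy_apply]
    refine Finset.sum_congr rfl fun i _ => ?_
    rw [D_apply J hJd, Finset.sum_mul]
    refine Finset.sum_congr rfl fun p _ => ?_
    have hkp : (J y (EuclideanSpace.single k 1)) p = Jc J k p y := rfl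
    rw [hkp]; ring
  rw [e1, e2] at h2
  rw [pd_jc J hJd j k l, pd_jc J hJd k j l]
  linarith

theorem pd_sub_add {n : ℕ} (k : Fin n) (f g h : EuclideanSpace ℝ (Fin n) → ℝ)
    (x : EuclideanSpace ℝ (Fin n))
    (hf : DifferentiableAt ℝ f x) (hg : DifferentiableAt ℝ g x)
    (hh : DifferentiableAt ℝ h x) :
    pd k (fun y => f y - g y + h y) x = pd k f x - pd k g x + pd k h x := by
  unfold pd
  rw [fderiv_fun_add (hf.fun_sub hg) hh, fderiv_fun_sub hf hg]
  simp


/-- For an integrable almost complex structure field `J` on flat `ℝⁿ`, the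
divergence of the contracted Nijenhuis tensor yields
`0 = D^k D_j J_k^l - D^k D_k J_j^l + D^k [ J_i^l J_j^p ∂_p J_k^i - J_i^l J_k^p ∂_p J_j^i ]`. -/
theorem div_nijenhuis_identity {n : ℕ} (hn : 1 ≤ n)
    (J : EuclideanSpace ℝ (Fin n) → (EuclideanSpace ℝ (Fin n) →L[ℝ] EuclideanSpace ℝ (Fin n)))
    (hC2 : ContDiff ℝ 2 J)
    (hJ2 : ∀ x, (J x).comp (J x) = -ContinuousLinearMap.id ℝ (EuclideanSpace ℝ (Fin n)))
    (hN : ∀ (x u w : EuclideanSpace ℝ (Fin n)),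
      fderiv ℝ J x (J x u) w - fderiv ℝ J x (J x w) u
        - J x (fderiv ℝ J x u w) + J x (fderiv ℝ J x w u) = 0) :
    ∀ (x : EuclideanSpace ℝ (Fin n)) (j l : Fin n),
      (∑ k, pd k (pd j (Jc J k l)) x)
        - (∑ k, pd k (pd k (Jc J j l)) x)
        + (∑ k, pd k (fun y =>
            (∑ i, ∑ p, Jc J i l y * Jc J j p y * pd p (Jc J k i) y)
              - ∑ i, ∑ p, Jc J i l y * Jc J k p y * pd p (Jc J j i) y) x) = 0 := by
  intro x j l
  have hjc : ∀ a b : Fin n, Differentiable ℝ (Jc J a b) :=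
    fun a b => (contDiff_jc J hC2 a b).differentiable (by norm_num)
  have hpd : ∀ p a b : Fin n, Differentiable ℝ (pd p (Jc J a b)) :=
    fun p a b => (contDiff_pd_jc J hC2 p a b).differentiable one_ne_zero
  have hFdiff : ∀ k : Fin n, DifferentiableAt ℝ (fun y =>
      (∑ i, ∑ p, Jc J i l y * Jc J j p y * pd p (Jc J k i) y)
        - ∑ i, ∑ p, Jc J i l y * Jc J k p y * pd p (Jc J j i) y) x := by
    intro k
    apply DifferentiableAt.sub
    · exact DifferentiableAt.fun_sum fun i _ => DifferentiableAt.fun_sum fun p _ =>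
        (((hjc i l x).mul (hjc j p x)).mul (hpd p k i x))
    · exact DifferentiableAt.fun_sum fun i _ => DifferentiableAt.fun_sum fun p _ =>
        (((hjc i l x).mul (hjc k p x)).mul (hpd p j i x))
  have hsplit : ∀ k : Fin n,
      pd k (pd j (Jc J k l)) x - pd k (pd k (Jc J j l)) x
        + pd k (fun y =>
            (∑ i, ∑ p, Jc J i l y * Jc J j p y * pd p (Jc J k i) y)
              - ∑ i, ∑ p, Jc J i l y * Jc J k p y * pd p (Jc J j i) y) x = 0 := by
    intro k
    rw [← pd_sub_add k _ _ _ x ((hpd j k l) x) ((hpd k j l) x) (hFdiff k)]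
    have hzero : (fun y => pd j (Jc J k l) y - pd k (Jc J j l) y
        + ((∑ i, ∑ p, Jc J i l y * Jc J j p y * pd p (Jc J k i) y)
           - ∑ i, ∑ p, Jc J i l y * Jc J k p y * pd p (Jc J j i) y))
        = fun _ => (0 : ℝ) :=
      funext fun y => key J hC2 hJ2 hN y j k l
    rw [hzero]
    simp [pd]
  calc (∑ k, pd k (pd j (Jc J k l)) x)
        - (∑ k, pd k (pd k (Jc J j l)) x)
        + (∑ k, pd k (fun y =>
            (∑ i, ∑ p, Jc J i l y * Jc J j p y * pd p (Jc J k i) y)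
              - ∑ i, ∑ p, Jc J i l y * Jc J k p y * pd p (Jc J j i) y) x)
      = ∑ k, (pd k (pd j (Jc J k l)) x - pd k (pd k (Jc J j l)) x
        + pd k (fun y =>
            (∑ i, ∑ p, Jc J i l y * Jc J j p y * pd p (Jc J k i) y)
              - ∑ i, ∑ p, Jc J i l y * Jc J k p y * pd p (Jc J j i) y) x) := by
        rw [Finset.sum_add_distrib, Finset.sum_sub_distrib]
    _ = 0 := Finset.sum_eq_zero fun k _ => hsplit k
end

section
/- Let n ≥ 1 and let J : ℝⁿ → (ℝⁿ →L[ℝ] ℝⁿ) be a twice continuously differentiable field of endomorphisms such that for every x: J(x)² = −id, J(x) is skew-adjoint with respect to the standard inner product, and the Nijenhuis expression vanishes: (DJ)(x)(J(x)u)(w) − (DJ)(x)(J(x)w)(u) − J(x)((DJ)(x)(u)(w)) + J(x)((DJ)(x)(w)(u)) = 0 for all u, w. Write J_k^l(x) = ⟨J(x) e_k, e_l⟩ for the components in the standard basis, ∂_p for the partial derivative in direction e_p, and use the summation convention with indices raised and lowered by the Euclidean metric. Define the vector field X by X^p = −J_t^p ∂^s J_s^t. Then for all x and all k, l, the Lie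 derivative of J along X, (L_X J)_k^l = J_p^l ∂_k X^p − J_k^p ∂_p X^l + X^p ∂_p J_k^l, satisfies (L_X J)_k^l = Δ J_k^l + Q(DJ)_k^l, where Δ J_k^l = ∑_s ∂_s ∂_s J_k^l and Q(DJ)_k^l = − J_k^p ∂^s J_i^l ∂_p J_s^i − J_i^l ∂^s J_k^p ∂_p J_s^i + J_s^p ∂^s J_i^l ∂_p J_k^i + J_i^l ∂^s J_s^p ∂_p J_k^i − J_p^l ∂_k J_t^p ∂^s J_s^t + J_k^p ∂_p J_t^l ∂^s J_s^t − J_t^p ∂^s J_s^t ∂_p J_k^l. (This is Proposition 3.2 of the paper — the evolution equation ∂J/∂t = ΔJ − [J, g⁻¹Rc] + Q(DJ) for the complex structure along the gauge-transformed pluriclosed flow — specialized to the flat Euclidean metric, where the Levi-Civita connection is the coordinate derivative and all curvature terms vanish.) -/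
open scoped RealInnerProductSpace

/-- The components `X^p = - J_t^p ∂^s J_s^t` of the gauge vector field. -/
noncomputable def Xc {n : ℕ}
    (J : EuclideanSpace ℝ (Fin n) → (EuclideanSpace ℝ (Fin n) →L[ℝ] EuclideanSpace ℝ (Fin n)))
    (p : Fin n) (x : EuclideanSpace ℝ (Fin n)) : ℝ :=
  - ∑ t, ∑ s, Jc J t p x * pd s (Jc J s t) x

namespace LieAux

abbrev Es (n : ℕ) := EuclideanSpace ℝ (Fin n)

variable {n : ℕ}

noncomputable def ee (p : Fin n) : Es n := EuclideanSpace.single p 1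

lemma sum_single (v : Es n) : ∑ p, v p • ee p = v := by
  ext q
  rw [show (∑ p, v p • (ee p : Es n)) q = ∑ p, (v p • (ee p : Es n)) q from
    by rw [WithLp.ofLp_sum, Finset.sum_apply]]
  simp [ee, EuclideanSpace.single_apply]

lemma clm_decomp {F : Type*} [NormedAddCommGroup F] [NormedSpace ℝ F]
    (A : Es n →L[ℝ] F) (v : Es n) : A v = ∑ p, v p • A (ee p) := by
  conv_lhs => rw [← sum_single v]
  rw [map_sum]
  simp

lemma eval1 (A : Es n →L[ℝ] Es n) (v : Es n) (c : Fin n) :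
    (A v) c = ∑ p, v p * (A (ee p)) c := by
  rw [clm_decomp A v]
  rw [show ((∑ p, v p • A (ee p) : Es n)) c = ∑ p, (v p • A (ee p) : Es n) c from
    by rw [WithLp.ofLp_sum, Finset.sum_apply]]
  simp

lemma eval2 (A : Es n →L[ℝ] (Es n →L[ℝ] Es n)) (v w : Es n) (c : Fin n) :
    (A v w) c = ∑ p, v p * (A (ee p) w) c := by
  rw [clm_decomp A v]
  rw [ContinuousLinearMap.sum_apply]
  rw [show ((∑ p, (v p • A (ee p)) w : Es n)) c = ∑ p, ((v p • A (ee p)) w : Es n) c from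
    by rw [WithLp.ofLp_sum, Finset.sum_apply]]
  simp

noncomputable def phi (k l : Fin n) : (Es n →L[ℝ] Es n) →L[ℝ] ℝ :=
  (EuclideanSpace.proj l).comp (ContinuousLinearMap.apply ℝ (Es n) (ee k))

lemma phi_apply (k l : Fin n) (A : Es n →L[ℝ] Es n) : phi k l A = (A (ee k)) l := rfl

variable {J : Es n → (Es n →L[ℝ] Es n)}

lemma contDiff_Jc (hC2 : ContDiff ℝ 2 J) (a b : Fin n) : ContDiff ℝ 2 (Jc J a b) :=
  (phi a b).contDiff.comp hC2

lemma diff_J (hC2 : ContDiff ℝ 2 J) : Differentiable ℝ J := hC2.differentiable two_ne_zero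

lemma fderiv_Jc (hC2 : ContDiff ℝ 2 J) (a b : Fin n) (x : Es n) :
    fderiv ℝ (Jc J a b) x = (phi a b).comp (fderiv ℝ J x) := by
  have h := ((phi a b).hasFDerivAt (x := J x)).comp x (diff_J hC2 x).hasFDerivAt
  exact h.fderiv

lemma pd_Jc (hC2 : ContDiff ℝ 2 J) (p a b : Fin n) (x : Es n) :
    pd p (Jc J a b) x = (fderiv ℝ J x (ee p) (ee a)) b := by
  rw [pd, fderiv_Jc hC2]
  rfl

lemma contDiff_fderivJ (hC2 : ContDiff ℝ 2 J) : ContDiff ℝ 1 (fderiv ℝ J) :=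
  hC2.fderiv_right (le_refl 2)

noncomputable def psi (p a b : Fin n) : (Es n →L[ℝ] (Es n →L[ℝ] Es n)) →L[ℝ] ℝ :=
  (phi a b).comp (ContinuousLinearMap.apply ℝ (Es n →L[ℝ] Es n) (ee p))

lemma pdJc_eq (hC2 : ContDiff ℝ 2 J) (p a b : Fin n) :
    pd p (Jc J a b) = fun x => psi p a b (fderiv ℝ J x) := by
  funext x
  rw [pd_Jc hC2]
  rfl

lemma contDiff_pdJc (hC2 : ContDiff ℝ 2 J) (p a b : Fin n) :
    ContDiff ℝ 1 (pd p (Jc J a b)) := by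
  rw [pdJc_eq hC2]
  exact (psi p a b).contDiff.comp (contDiff_fderivJ hC2)

lemma clmc {E F G : Type*} [NormedAddCommGroup E] [NormedSpace ℝ E] [NormedAddCommGroup F]
    [NormedSpace ℝ F] [NormedAddCommGroup G] [NormedSpace ℝ G] (L : F →L[ℝ] G) (f : E → F)
    (x : E) (hf : ContDiff ℝ 1 f) : fderiv ℝ (⇑L ∘ f) x = L.comp (fderiv ℝ f x) :=
  (L.hasFDerivAt.comp x ((hf.differentiable one_ne_zero) x).hasFDerivAt).fderiv

lemma pd_pd_Jc (hC2 : ContDiff ℝ 2 J) (s p a b : Fin n) (x : Es n) :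
    pd s (pd p (Jc J a b)) x = (fderiv ℝ (fderiv ℝ J) x (ee s) (ee p) (ee a)) b := by
  rw [pdJc_eq hC2 p a b, pd]
  have h := clmc (psi p a b) (fderiv ℝ J) x (contDiff_fderivJ hC2)
  rw [show (fderiv ℝ (fun y => psi p a b (fderiv ℝ J y)) x)
      = fderiv ℝ (⇑(psi p a b) ∘ fderiv ℝ J) x from rfl, h]
  rfl

lemma dd_symm (hC2 : ContDiff ℝ 2 J) (s p a b : Fin n) (x : Es n) :
    pd s (pd p (Jc J a b)) x = pd p (pd s (Jc J a b)) x := by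
  rw [pd_pd_Jc hC2, pd_pd_Jc hC2]
  have h : fderiv ℝ (fderiv ℝ J) x (ee s) (ee p) = fderiv ℝ (fderiv ℝ J) x (ee p) (ee s) :=
    hC2.contDiffAt.isSymmSndFDerivAt (by simp) (ee s) (ee p)
  rw [h]



section pdAlgebra

variable {f g : Es n → ℝ} {x : Es n} {p : Fin n}

lemma pd_mul (hf : DifferentiableAt ℝ f x) (hg : DifferentiableAt ℝ g x) :
    pd p (fun y => f y * g y) x = pd p f x * g x + f x * pd p g x := by
  unfold pd
  rw [fderiv_fun_mul hf hg]
  simp only [ContinuousLinearMap.add_apply, ContinuousLinearMap.smul_apply, smul_eq_mul]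
  ring

lemma pd_fun_neg : pd p (fun y => -f y) x = -pd p f x := by
  unfold pd
  rw [fderiv_fun_neg]
  simp

lemma pd_const (c : ℝ) : pd p (fun _ => c) x = 0 := by
  unfold pd
  rw [fderiv_fun_const]
  simp

lemma pd_sum {ι : Type*} (s : Finset ι) (F : ι → Es n → ℝ)
    (h : ∀ i ∈ s, DifferentiableAt ℝ (F i) x) :
    pd p (fun y => ∑ i ∈ s, F i y) x = ∑ i ∈ s, pd p (F i) x := by
  unfold pd
  rw [fderiv_fun_sum h]
  simp

end pdAlgebra

section pdAlgebra2

variable {f g : Es n → ℝ} {x : Es n} {p : Fin n}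

lemma pd_add (hf : DifferentiableAt ℝ f x) (hg : DifferentiableAt ℝ g x) :
    pd p (fun y => f y + g y) x = pd p f x + pd p g x := by
  unfold pd
  rw [fderiv_fun_add hf hg]
  simp

lemma pd_sub (hf : DifferentiableAt ℝ f x) (hg : DifferentiableAt ℝ g x) :
    pd p (fun y => f y - g y) x = pd p f x - pd p g x := by
  unfold pd
  rw [fderiv_fun_sub hf hg]
  simp

end pdAlgebra2

section identities

variable {J : Es n → (Es n →L[ℝ] Es n)}

lemma Jc_apply (a b : Fin n) (x : Es n) : Jc J a b x = (J x (ee a)) b := rfl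

lemma H1 (hJ2 : ∀ x, (J x).comp (J x) = -ContinuousLinearMap.id ℝ (EuclideanSpace ℝ (Fin n)))
    (x : Es n) (a b : Fin n) :
    ∑ p, Jc J a p x * Jc J p b x = if a = b then (-1:ℝ) else 0 := by
  have h := congrArg (fun A : Es n →L[ℝ] Es n => (A (ee a)) b) (hJ2 x)
  simp only [ContinuousLinearMap.comp_apply, ContinuousLinearMap.neg_apply,
    ContinuousLinearMap.id_apply] at h
  rw [eval1 (J x) (J x (ee a)) b] at h
  have h2 : ((-(ee a) : Es n)) b = if a = b then (-1:ℝ) else 0 := by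
    simp only [PiLp.neg_apply, ee, EuclideanSpace.single_apply, eq_comm]
    split <;> norm_num
  rw [h2] at h
  exact h

open scoped RealInnerProductSpace in
lemma H3 (hskew : ∀ (x u v : EuclideanSpace ℝ (Fin n)), ⟪J x u, v⟫ = - ⟪u, J x v⟫)
    (x : Es n) (a b : Fin n) : Jc J a b x = - Jc J b a x := by
  have h := hskew x (ee a) (ee b)
  simp only [ee, EuclideanSpace.inner_single_left, EuclideanSpace.inner_single_right,
    RCLike.star_def, conj_trivial, one_mul] at h
  rw [Jc_apply, Jc_apply]
  exact h

lemma diffJc (hC2 : ContDiff ℝ 2 J) (a b : Fin n) (x : Es n) :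
    DifferentiableAt ℝ (Jc J a b) x :=
  ((contDiff_Jc hC2 a b).differentiable two_ne_zero) x

lemma diffpdJc (hC2 : ContDiff ℝ 2 J) (p a b : Fin n) (x : Es n) :
    DifferentiableAt ℝ (pd p (Jc J a b)) x :=
  ((contDiff_pdJc hC2 p a b).differentiable one_ne_zero) x

lemma H2 (hC2 : ContDiff ℝ 2 J)
    (hJ2 : ∀ x, (J x).comp (J x) = -ContinuousLinearMap.id ℝ (EuclideanSpace ℝ (Fin n)))
    (x : Es n) (s a b : Fin n) :
    ∑ p, (pd s (Jc J a p) x * Jc J p b x + Jc J a p x * pd s (Jc J p b) x) = 0 := by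
  have hfun : (fun y => ∑ p, Jc J a p y * Jc J p b y) = fun _ => (if a = b then (-1:ℝ) else 0) :=
    funext fun y => H1 hJ2 y a b
  have h0 : pd s (fun y => ∑ p, Jc J a p y * Jc J p b y) x = 0 := by
    rw [hfun]; exact pd_const _
  rw [pd_sum Finset.univ _
    (fun p _ => (diffJc hC2 a p x).fun_mul (diffJc hC2 p b x))] at h0
  rw [← h0]
  refine (Finset.sum_congr rfl fun p _ => ?_).symm
  exact pd_mul (diffJc hC2 a p x) (diffJc hC2 p b x)

lemma H4 (hC2 : ContDiff ℝ 2 J)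
    (hN : ∀ (x u w : EuclideanSpace ℝ (Fin n)),
      fderiv ℝ J x (J x u) w - fderiv ℝ J x (J x w) u
        - J x (fderiv ℝ J x u w) + J x (fderiv ℝ J x w u) = 0)
    (x : Es n) (a b c : Fin n) :
    ∑ p, (Jc J a p x * pd p (Jc J b c) x - Jc J b p x * pd p (Jc J a c) x
      - pd a (Jc J b p) x * Jc J p c x + pd b (Jc J a p) x * Jc J p c x) = 0 := by
  have h := congrArg (fun v : Es n => v c) (hN x (ee a) (ee b))
  simp only [PiLp.sub_apply, PiLp.add_apply, PiLp.zero_apply] at h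
  have e1 : (fderiv ℝ J x (J x (ee a)) (ee b)) c = ∑ p, Jc J a p x * pd p (Jc J b c) x := by
    rw [eval2 (fderiv ℝ J x) (J x (ee a)) (ee b) c]
    exact Finset.sum_congr rfl fun p _ => by rw [pd_Jc hC2, Jc_apply]
  have e2 : (fderiv ℝ J x (J x (ee b)) (ee a)) c = ∑ p, Jc J b p x * pd p (Jc J a c) x := by
    rw [eval2 (fderiv ℝ J x) (J x (ee b)) (ee a) c]
    exact Finset.sum_congr rfl fun p _ => by rw [pd_Jc hC2, Jc_apply]
  have e3 : (J x (fderiv ℝ J x (ee a) (ee b))) c = ∑ p, pd a (Jc J b p) x * Jc J p c x := by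
    rw [eval1 (J x) (fderiv ℝ J x (ee a) (ee b)) c]
    exact Finset.sum_congr rfl fun p _ => by rw [pd_Jc hC2, Jc_apply]
  have e4 : (J x (fderiv ℝ J x (ee b) (ee a))) c = ∑ p, pd b (Jc J a p) x * Jc J p c x := by
    rw [eval1 (J x) (fderiv ℝ J x (ee b) (ee a)) c]
    exact Finset.sum_congr rfl fun p _ => by rw [pd_Jc hC2, Jc_apply]
  rw [e1, e2, e3, e4] at h
  rw [← h]
  rw [Finset.sum_add_distrib, Finset.sum_sub_distrib, Finset.sum_sub_distrib]

end identities

section identities2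

variable {J : Es n → (Es n →L[ℝ] Es n)}

lemma H5 (hC2 : ContDiff ℝ 2 J)
    (hN : ∀ (x u w : EuclideanSpace ℝ (Fin n)),
      fderiv ℝ J x (J x u) w - fderiv ℝ J x (J x w) u
        - J x (fderiv ℝ J x u w) + J x (fderiv ℝ J x w u) = 0)
    (x : Es n) (s a b c : Fin n) :
    ∑ p, ((pd s (Jc J a p) x * pd p (Jc J b c) x + Jc J a p x * pd s (pd p (Jc J b c)) x)
      - (pd s (Jc J b p) x * pd p (Jc J a c) x + Jc J b p x * pd s (pd p (Jc J a c)) x)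
      - (pd s (pd a (Jc J b p)) x * Jc J p c x + pd a (Jc J b p) x * pd s (Jc J p c) x)
      + (pd s (pd b (Jc J a p)) x * Jc J p c x + pd b (Jc J a p) x * pd s (Jc J p c) x)) = 0 := by
  have hfun : (fun y => ∑ p, (Jc J a p y * pd p (Jc J b c) y - Jc J b p y * pd p (Jc J a c) y
      - pd a (Jc J b p) y * Jc J p c y + pd b (Jc J a p) y * Jc J p c y)) = fun _ => (0:ℝ) :=
    funext fun y => H4 hC2 hN y a b c
  have h0 : pd s (fun y => ∑ p, (Jc J a p y * pd p (Jc J b c) y - Jc J b p y * pd p (Jc J a c) y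
      - pd a (Jc J b p) y * Jc J p c y + pd b (Jc J a p) y * Jc J p c y)) x = 0 := by
    rw [hfun]; exact pd_const 0
  calc ∑ p, ((pd s (Jc J a p) x * pd p (Jc J b c) x + Jc J a p x * pd s (pd p (Jc J b c)) x)
      - (pd s (Jc J b p) x * pd p (Jc J a c) x + Jc J b p x * pd s (pd p (Jc J a c)) x)
      - (pd s (pd a (Jc J b p)) x * Jc J p c x + pd a (Jc J b p) x * pd s (Jc J p c) x)
      + (pd s (pd b (Jc J a p)) x * Jc J p c x + pd b (Jc J a p) x * pd s (Jc J p c) x))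
      = ∑ p, pd s (fun y => Jc J a p y * pd p (Jc J b c) y - Jc J b p y * pd p (Jc J a c) y
          - pd a (Jc J b p) y * Jc J p c y + pd b (Jc J a p) y * Jc J p c y) x := by
        refine Finset.sum_congr rfl fun p _ => Eq.symm ?_
        rw [pd_add ((((diffJc hC2 a p x).fun_mul (diffpdJc hC2 p b c x)).fun_sub
              ((diffJc hC2 b p x).fun_mul (diffpdJc hC2 p a c x))).fun_sub
              ((diffpdJc hC2 a b p x).fun_mul (diffJc hC2 p c x)))
            ((diffpdJc hC2 b a p x).fun_mul (diffJc hC2 p c x)),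
          pd_sub (((diffJc hC2 a p x).fun_mul (diffpdJc hC2 p b c x)).fun_sub
              ((diffJc hC2 b p x).fun_mul (diffpdJc hC2 p a c x)))
            ((diffpdJc hC2 a b p x).fun_mul (diffJc hC2 p c x)),
          pd_sub ((diffJc hC2 a p x).fun_mul (diffpdJc hC2 p b c x))
            ((diffJc hC2 b p x).fun_mul (diffpdJc hC2 p a c x)),
          pd_mul (diffJc hC2 a p x) (diffpdJc hC2 p b c x),
          pd_mul (diffJc hC2 b p x) (diffpdJc hC2 p a c x),
          pd_mul (diffpdJc hC2 a b p x) (diffJc hC2 p c x),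
          pd_mul (diffpdJc hC2 b a p x) (diffJc hC2 p c x)]
    _ = pd s (fun y => ∑ p, (Jc J a p y * pd p (Jc J b c) y - Jc J b p y * pd p (Jc J a c) y
          - pd a (Jc J b p) y * Jc J p c y + pd b (Jc J a p) y * Jc J p c y)) x := by
        refine Eq.symm (pd_sum Finset.univ _ fun p _ => ?_)
        exact ((((diffJc hC2 a p x).fun_mul (diffpdJc hC2 p b c x)).fun_sub
              ((diffJc hC2 b p x).fun_mul (diffpdJc hC2 p a c x))).fun_sub
              ((diffpdJc hC2 a b p x).fun_mul (diffJc hC2 p c x))).fun_add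
            ((diffpdJc hC2 b a p x).fun_mul (diffJc hC2 p c x))
    _ = 0 := h0

end identities2

section xc

variable {J : Es n → (Es n →L[ℝ] Es n)}

lemma pdXc (hC2 : ContDiff ℝ 2 J) (k p : Fin n) (x : Es n) :
    pd k (Xc J p) x
      = -∑ t, ∑ s, (pd k (Jc J t p) x * pd s (Jc J s t) x
          + Jc J t p x * pd k (pd s (Jc J s t)) x) := by
  have h1 : pd k (Xc J p) x
      = pd k (fun y => -∑ t, ∑ s, Jc J t p y * pd s (Jc J s t) y) x := rfl
  rw [h1, pd_fun_neg, neg_inj]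
  have hF : ∀ t ∈ Finset.univ (α := Fin n),
      DifferentiableAt ℝ (fun y => ∑ s, Jc J t p y * pd s (Jc J s t) y) x :=
    fun t _ => DifferentiableAt.fun_sum fun s _ => (diffJc hC2 t p x).fun_mul (diffpdJc hC2 s s t x)
  rw [pd_sum Finset.univ _ hF]
  refine Finset.sum_congr rfl fun t _ => ?_
  have hG : ∀ s ∈ Finset.univ (α := Fin n),
      DifferentiableAt ℝ (fun y => Jc J t p y * pd s (Jc J s t) y) x :=
    fun s _ => (diffJc hC2 t p x).fun_mul (diffpdJc hC2 s s t x)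
  rw [pd_sum Finset.univ _ hG]
  exact Finset.sum_congr rfl fun s _ => pd_mul (diffJc hC2 t p x) (diffpdJc hC2 s s t x)

end xc

section key

lemma sum_swap12 (f : Fin n → Fin n → Fin n → ℝ) :
    ∑ a, ∑ b, ∑ c, f a b c = ∑ b, ∑ a, ∑ c, f a b c := Finset.sum_comm

lemma sum_swap23 (f : Fin n → Fin n → Fin n → ℝ) :
    ∑ a, ∑ b, ∑ c, f a b c = ∑ a, ∑ c, ∑ b, f a b c :=
  Finset.sum_congr rfl fun _ _ => Finset.sum_comm

lemma sum3_congr (f g : Fin n → Fin n → Fin n → ℝ) (h : ∀ a b c, f a b c = g a b c) :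
    ∑ a, ∑ b, ∑ c, f a b c = ∑ a, ∑ b, ∑ c, g a b c :=
  Finset.sum_congr rfl fun a _ => Finset.sum_congr rfl fun b _ =>
    Finset.sum_congr rfl fun c _ => h a b c

lemma contract1 {j : Fin n → Fin n → ℝ}
    (H1 : ∀ a b, ∑ p, j a p * j p b = if a = b then (-1:ℝ) else 0)
    (b : Fin n) (f : Fin n → ℝ) :
    ∑ t, (∑ p, j t p * j p b) * f t = - f b := by
  calc ∑ t, (∑ p, j t p * j p b) * f t
      = ∑ t, (if t = b then (-1:ℝ) else 0) * f t :=
        Finset.sum_congr rfl fun t _ => by rw [H1]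
    _ = - f b := by simp [ite_mul]

lemma key {n : ℕ} (j : Fin n → Fin n → ℝ) (d : Fin n → Fin n → Fin n → ℝ)
    (dd : Fin n → Fin n → Fin n → Fin n → ℝ)
    (H1 : ∀ a b, ∑ p, j a p * j p b = if a = b then (-1:ℝ) else 0)
    (H2 : ∀ s a b, ∑ p, (d s a p * j p b + j a p * d s p b) = 0)
    (H3 : ∀ a b, j a b = - j b a)
    (H4 : ∀ a b c, ∑ p, (j a p * d p b c - j b p * d p a c - d a b p * j p c + d b a p * j p c) = 0)
    (H5 : ∀ s a b c, ∑ p, ((d s a p * d p b c + j a p * dd s p b c)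
      - (d s b p * d p a c + j b p * dd s p a c)
      - (dd s a b p * j p c + d a b p * d s p c)
      + (dd s b a p * j p c + d b a p * d s p c)) = 0)
    (H6 : ∀ s t a b, dd s t a b = dd t s a b)
    (k l : Fin n) :
    (∑ p, j p l * (-∑ t, ∑ s, (d k t p * d s s t + j t p * dd k s s t)))
      - (∑ p, j k p * (-∑ t, ∑ s, (d p t l * d s s t + j t l * dd p s s t)))
      + ∑ p, (-∑ t, ∑ s, j t p * d s s t) * d p k l
    = (∑ s, dd s s k l)
      + (- (∑ p, ∑ s, ∑ i, j k p * d s i l * d p s i)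
        - (∑ p, ∑ s, ∑ i, j i l * d s k p * d p s i)
        + (∑ p, ∑ s, ∑ i, j s p * d s i l * d p k i)
        + (∑ p, ∑ s, ∑ i, j i l * d s s p * d p k i)
        - (∑ p, ∑ t, ∑ s, j p l * d k t p * d s s t)
        + (∑ p, ∑ t, ∑ s, j k p * d p t l * d s s t)
        - ∑ p, ∑ t, ∑ s, j t p * d s s t * d p k l) := by
  -- canonical quantities
  -- A := ∑ s, dd k s s l ; D := ∑ s, dd s s k l ; M := ∑ p, ∑ t, ∑ s, j k p * (j t l * dd p s s t)
  ------------------------------------------------------------------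
  -- h_t1 : first LHS term equals A - Q5
  have h_t1 : (∑ p, j p l * (-∑ t, ∑ s, (d k t p * d s s t + j t p * dd k s s t)))
      = (∑ s, dd k s s l) - ∑ p, ∑ t, ∑ s, j p l * d k t p * d s s t := by
    have e1 : (∑ p, j p l * (-∑ t, ∑ s, (d k t p * d s s t + j t p * dd k s s t)))
        = - (∑ p, ∑ t, ∑ s, j p l * d k t p * d s s t)
          - ∑ p, ∑ t, ∑ s, j p l * (j t p * dd k s s t) := by
      have e2 : ∀ p, j p l * (-∑ t, ∑ s, (d k t p * d s s t + j t p * dd k s s t))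
          = - (∑ t, ∑ s, j p l * d k t p * d s s t)
            - ∑ t, ∑ s, j p l * (j t p * dd k s s t) := by
        intro p
        rw [mul_neg, Finset.mul_sum]
        rw [show (∑ t, j p l * ∑ s, (d k t p * d s s t + j t p * dd k s s t))
            = ∑ t, ∑ s, (j p l * d k t p * d s s t + j p l * (j t p * dd k s s t)) from
          Finset.sum_congr rfl fun t _ => by
            rw [Finset.mul_sum]; exact Finset.sum_congr rfl fun s _ => by ring]
        simp only [Finset.sum_add_distrib]
        ring
      rw [Finset.sum_congr rfl fun p _ => e2 p]
      simp only [Finset.sum_sub_distrib, Finset.sum_neg_distrib]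
    have e3 : (∑ p, ∑ t, ∑ s, j p l * (j t p * dd k s s t)) = - ∑ s, dd k s s l := by
      rw [sum_swap12 (fun p t s => j p l * (j t p * dd k s s t)),
        sum_swap23 (fun t p s => j p l * (j t p * dd k s s t))]
      -- now ∑ t, ∑ s, ∑ p, j p l * (j t p * dd k s s t)
      have e4 : ∀ t, (∑ s, ∑ p, j p l * (j t p * dd k s s t))
          = (∑ p, j t p * j p l) * ∑ s, dd k s s t := by
        intro t
        rw [Finset.sum_comm, Finset.sum_mul]
        refine Finset.sum_congr rfl fun p _ => ?_
        rw [Finset.mul_sum]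
        exact Finset.sum_congr rfl fun s _ => by ring
      rw [Finset.sum_congr rfl fun t _ => e4 t]
      rw [contract1 H1 l (fun t => ∑ s, dd k s s t)]
    rw [e1, e3]
    ring
  ------------------------------------------------------------------
  -- h_t2
  have h_t2 : (∑ p, j k p * (-∑ t, ∑ s, (d p t l * d s s t + j t l * dd p s s t)))
      = - (∑ p, ∑ t, ∑ s, j k p * d p t l * d s s t)
        - ∑ p, ∑ t, ∑ s, j k p * (j t l * dd p s s t) := by
    have e2 : ∀ p, j k p * (-∑ t, ∑ s, (d p t l * d s s t + j t l * dd p s s t))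
        = - (∑ t, ∑ s, j k p * d p t l * d s s t)
          - ∑ t, ∑ s, j k p * (j t l * dd p s s t) := by
      intro p
      rw [mul_neg, Finset.mul_sum]
      rw [show (∑ t, j k p * ∑ s, (d p t l * d s s t + j t l * dd p s s t))
          = ∑ t, ∑ s, (j k p * d p t l * d s s t + j k p * (j t l * dd p s s t)) from
        Finset.sum_congr rfl fun t _ => by
          rw [Finset.mul_sum]; exact Finset.sum_congr rfl fun s _ => by ring]
      simp only [Finset.sum_add_distrib]
      ring
    rw [Finset.sum_congr rfl fun p _ => e2 p]
    simp only [Finset.sum_sub_distrib, Finset.sum_neg_distrib]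
  ------------------------------------------------------------------
  -- h_t3
  have h_t3 : (∑ p, (-∑ t, ∑ s, j t p * d s s t) * d p k l)
      = - ∑ p, ∑ t, ∑ s, j t p * d s s t * d p k l := by
    have e2 : ∀ p, (-∑ t, ∑ s, j t p * d s s t) * d p k l
        = - ∑ t, ∑ s, j t p * d s s t * d p k l := by
      intro p
      rw [neg_mul, Finset.sum_mul]
      refine congrArg Neg.neg (Finset.sum_congr rfl fun t _ => ?_)
      rw [Finset.sum_mul]
    rw [Finset.sum_congr rfl fun p _ => e2 p]
    simp only [Finset.sum_neg_distrib]
  ------------------------------------------------------------------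
  -- E2 : A + M - D = -Q2 + Q4 + T4 - T5
  have h_E2 : (∑ s, dd k s s l) + (∑ p, ∑ t, ∑ s, j k p * (j t l * dd p s s t))
        - (∑ s, dd s s k l)
      = - (∑ p, ∑ s, ∑ i, j i l * d s k p * d p s i)
        + (∑ p, ∑ s, ∑ i, j i l * d s s p * d p k i)
        + (∑ p, ∑ s, ∑ i, j i l * d k s p * d s p i)
        - (∑ p, ∑ s, ∑ i, j i l * d s k p * d s p i) := by
    -- start from the differentiated Nijenhuis identity, contracted with j · l
    have h5a : ∀ t, (∑ s, ∑ p, ((d s k p * d p s t + j k p * dd s p s t)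
        - (d s s p * d p k t + j s p * dd s p k t)
        - (dd s k s p * j p t + d k s p * d s p t)
        + (dd s s k p * j p t + d s k p * d s p t))) = 0 :=
      fun t => Finset.sum_eq_zero fun s _ => H5 s k s t
    have h5b : (∑ t, ∑ s, ∑ p, j t l * ((d s k p * d p s t + j k p * dd s p s t)
        - (d s s p * d p k t + j s p * dd s p k t)
        - (dd s k s p * j p t + d k s p * d s p t)
        + (dd s s k p * j p t + d s k p * d s p t))) = 0 := by
      refine Finset.sum_eq_zero fun t _ => ?_
      rw [show (∑ s, ∑ p, j t l * ((d s k p * d p s t + j k p * dd s p s t)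
          - (d s s p * d p k t + j s p * dd s p k t)
          - (dd s k s p * j p t + d k s p * d s p t)
          + (dd s s k p * j p t + d s k p * d s p t)))
        = j t l * ∑ s, ∑ p, ((d s k p * d p s t + j k p * dd s p s t)
          - (d s s p * d p k t + j s p * dd s p k t)
          - (dd s k s p * j p t + d k s p * d s p t)
          + (dd s s k p * j p t + d s k p * d s p t)) from by
          rw [Finset.mul_sum]
          exact Finset.sum_congr rfl fun s _ => by rw [Finset.mul_sum]]
      rw [h5a t, mul_zero]
    -- split into eight triple sums
    have hsplit : (∑ t, ∑ s, ∑ p, j t l * (d s k p * d p s t))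
        + (∑ t, ∑ s, ∑ p, j t l * (j k p * dd s p s t))
        - (∑ t, ∑ s, ∑ p, j t l * (d s s p * d p k t))
        - (∑ t, ∑ s, ∑ p, j t l * (j s p * dd s p k t))
        - (∑ t, ∑ s, ∑ p, j t l * (dd s k s p * j p t))
        - (∑ t, ∑ s, ∑ p, j t l * (d k s p * d s p t))
        + (∑ t, ∑ s, ∑ p, j t l * (dd s s k p * j p t))
        + (∑ t, ∑ s, ∑ p, j t l * (d s k p * d s p t)) = 0 := by
      rw [← h5b]
      simp only [← Finset.sum_add_distrib, ← Finset.sum_sub_distrib]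
      exact (sum3_congr _ _ fun t s p => by ring).symm
    -- evaluate each of the eight sums
    have hG1 : (∑ t, ∑ s, ∑ p, j t l * (d s k p * d p s t))
        = ∑ p, ∑ s, ∑ i, j i l * d s k p * d p s i := by
      rw [sum_swap12 (fun t s p => j t l * (d s k p * d p s t)),
        sum_swap23 (fun s t p => j t l * (d s k p * d p s t)),
        sum_swap12 (fun s p t => j t l * (d s k p * d p s t))]
      exact sum3_congr _ _ fun p s i => by ring
    have hG2 : (∑ t, ∑ s, ∑ p, j t l * (j k p * dd s p s t))
        = ∑ p, ∑ t, ∑ s, j k p * (j t l * dd p s s t) := by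
      rw [show (∑ t, ∑ s, ∑ p, j t l * (j k p * dd s p s t))
          = ∑ t, ∑ s, ∑ p, j t l * (j k p * dd p s s t) from
        sum3_congr _ _ fun t s p => by rw [H6 s p s t]]
      rw [sum_swap23 (fun t s p => j t l * (j k p * dd p s s t)),
        sum_swap12 (fun t p s => j t l * (j k p * dd p s s t))]
      exact sum3_congr _ _ fun p t s => by ring
    have hG3 : (∑ t, ∑ s, ∑ p, j t l * (d s s p * d p k t))
        = ∑ p, ∑ s, ∑ i, j i l * d s s p * d p k i := by
      rw [sum_swap12 (fun t s p => j t l * (d s s p * d p k t)),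
        sum_swap23 (fun s t p => j t l * (d s s p * d p k t)),
        sum_swap12 (fun s p t => j t l * (d s s p * d p k t))]
      exact sum3_congr _ _ fun p s i => by ring
    have hG4 : (∑ t, ∑ s, ∑ p, j t l * (j s p * dd s p k t)) = 0 := by
      have e : (∑ t, ∑ s, ∑ p, j t l * (j s p * dd s p k t))
          = - ∑ t, ∑ s, ∑ p, j t l * (j s p * dd s p k t) := by
        conv_lhs => rw [show (∑ t, ∑ s, ∑ p, j t l * (j s p * dd s p k t))
            = ∑ t, ∑ s, ∑ p, j t l * (j p s * dd p s k t) from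
          Finset.sum_congr rfl fun t _ => Finset.sum_comm]
        rw [show (∑ t, ∑ s, ∑ p, j t l * (j p s * dd p s k t))
            = ∑ t, ∑ s, ∑ p, -(j t l * (j s p * dd s p k t)) from
          sum3_congr _ _ fun t s p => by rw [H3 p s, H6 p s k t]; ring]
        simp only [Finset.sum_neg_distrib]
      linarith
    have hG5 : (∑ t, ∑ s, ∑ p, j t l * (dd s k s p * j p t)) = - ∑ s, dd k s s l := by
      rw [sum_swap12 (fun t s p => j t l * (dd s k s p * j p t)),
        sum_swap23 (fun s t p => j t l * (dd s k s p * j p t))]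
      -- ∑ s, ∑ p, ∑ t, ...
      have e4 : ∀ s, (∑ p, ∑ t, j t l * (dd s k s p * j p t))
          = ∑ p, (∑ t, j p t * j t l) * dd s k s p := by
        refine fun s => Finset.sum_congr rfl fun p _ => ?_
        rw [Finset.sum_mul]
        exact Finset.sum_congr rfl fun t _ => by ring
      rw [Finset.sum_congr rfl fun s _ => e4 s]
      rw [show (∑ s, ∑ p, (∑ t, j p t * j t l) * dd s k s p)
          = ∑ s, ∑ p, (if p = l then (-1:ℝ) else 0) * dd s k s p from
        Finset.sum_congr rfl fun s _ => Finset.sum_congr rfl fun p _ => by rw [H1 p l]]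
      rw [show (∑ s, ∑ p, (if p = l then (-1:ℝ) else 0) * dd s k s p)
          = ∑ s, -(dd s k s l) from
        Finset.sum_congr rfl fun s _ => by simp [ite_mul]]
      simp only [Finset.sum_neg_distrib]
      congr 1
      exact Finset.sum_congr rfl fun s _ => H6 s k s l
    have hG6 : (∑ t, ∑ s, ∑ p, j t l * (d k s p * d s p t))
        = ∑ p, ∑ s, ∑ i, j i l * d k s p * d s p i := by
      rw [sum_swap12 (fun t s p => j t l * (d k s p * d s p t)),
        sum_swap23 (fun s t p => j t l * (d k s p * d s p t)),
        sum_swap12 (fun s p t => j t l * (d k s p * d s p t))]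
      exact sum3_congr _ _ fun p s i => by ring
    have hG7 : (∑ t, ∑ s, ∑ p, j t l * (dd s s k p * j p t)) = - ∑ s, dd s s k l := by
      rw [sum_swap12 (fun t s p => j t l * (dd s s k p * j p t)),
        sum_swap23 (fun s t p => j t l * (dd s s k p * j p t))]
      have e4 : ∀ s, (∑ p, ∑ t, j t l * (dd s s k p * j p t))
          = ∑ p, (∑ t, j p t * j t l) * dd s s k p := by
        refine fun s => Finset.sum_congr rfl fun p _ => ?_
        rw [Finset.sum_mul]
        exact Finset.sum_congr rfl fun t _ => by ring
      rw [Finset.sum_congr rfl fun s _ => e4 s]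
      rw [show (∑ s, ∑ p, (∑ t, j p t * j t l) * dd s s k p)
          = ∑ s, ∑ p, (if p = l then (-1:ℝ) else 0) * dd s s k p from
        Finset.sum_congr rfl fun s _ => Finset.sum_congr rfl fun p _ => by rw [H1 p l]]
      rw [show (∑ s, ∑ p, (if p = l then (-1:ℝ) else 0) * dd s s k p)
          = ∑ s, -(dd s s k l) from
        Finset.sum_congr rfl fun s _ => by simp [ite_mul]]
      simp only [Finset.sum_neg_distrib]
    have hG8 : (∑ t, ∑ s, ∑ p, j t l * (d s k p * d s p t))
        = ∑ p, ∑ s, ∑ i, j i l * d s k p * d s p i := by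
      rw [sum_swap12 (fun t s p => j t l * (d s k p * d s p t)),
        sum_swap23 (fun s t p => j t l * (d s k p * d s p t)),
        sum_swap12 (fun s p t => j t l * (d s k p * d s p t))]
      exact sum3_congr _ _ fun p s i => by ring
    rw [hG1, hG2, hG3, hG4, hG5, hG6, hG7, hG8] at hsplit
    linarith
  ------------------------------------------------------------------
  -- E3 : T4 - T5 = Q3 - Q1
  have h_E3 : (∑ p, ∑ s, ∑ i, j i l * d k s p * d s p i)
        - (∑ p, ∑ s, ∑ i, j i l * d s k p * d s p i)
      = (∑ p, ∑ s, ∑ i, j s p * d s i l * d p k i)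
        - (∑ p, ∑ s, ∑ i, j k p * d s i l * d p s i) := by
    have h4a : (∑ s, ∑ i, ∑ p, d s i l * (j k p * d p s i - j s p * d p k i
        - d k s p * j p i + d s k p * j p i)) = 0 := by
      refine Finset.sum_eq_zero fun s _ => Finset.sum_eq_zero fun i _ => ?_
      rw [← Finset.mul_sum, H4 k s i, mul_zero]
    have hsplit : (∑ s, ∑ i, ∑ p, d s i l * (j k p * d p s i))
        - (∑ s, ∑ i, ∑ p, d s i l * (j s p * d p k i))
        - (∑ s, ∑ i, ∑ p, d s i l * (d k s p * j p i))
        + (∑ s, ∑ i, ∑ p, d s i l * (d s k p * j p i)) = 0 := by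
      rw [← h4a]
      simp only [← Finset.sum_add_distrib, ← Finset.sum_sub_distrib]
      exact (sum3_congr _ _ fun s i p => by ring).symm
    have hK1 : (∑ s, ∑ i, ∑ p, d s i l * (j k p * d p s i))
        = ∑ p, ∑ s, ∑ i, j k p * d s i l * d p s i := by
      rw [sum_swap23 (fun s i p => d s i l * (j k p * d p s i)),
        sum_swap12 (fun s p i => d s i l * (j k p * d p s i))]
      exact sum3_congr _ _ fun p s i => by ring
    have hK2 : (∑ s, ∑ i, ∑ p, d s i l * (j s p * d p k i))
        = ∑ p, ∑ s, ∑ i, j s p * d s i l * d p k i := by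
      rw [sum_swap23 (fun s i p => d s i l * (j s p * d p k i)),
        sum_swap12 (fun s p i => d s i l * (j s p * d p k i))]
      exact sum3_congr _ _ fun p s i => by ring
    -- hH2' : ∀ s p, ∑ i, j p i * d s i l = - ∑ i, d s p i * j i l
    have hH2' : ∀ s p, ∑ i, j p i * d s i l = - ∑ i, d s p i * j i l := by
      intro s p
      have := H2 s p l
      rw [Finset.sum_add_distrib] at this
      linarith
    have hK3 : (∑ s, ∑ i, ∑ p, d s i l * (d k s p * j p i))
        = - ∑ p, ∑ s, ∑ i, j i l * d k s p * d s p i := by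
      rw [sum_swap23 (fun s i p => d s i l * (d k s p * j p i))]
      -- ∑ s, ∑ p, ∑ i, d s i l * (d k s p * j p i)
      rw [show (∑ s, ∑ p, ∑ i, d s i l * (d k s p * j p i))
          = ∑ s, ∑ p, d k s p * ∑ i, j p i * d s i l from
        Finset.sum_congr rfl fun s _ => Finset.sum_congr rfl fun p _ => by
          rw [Finset.mul_sum]; exact Finset.sum_congr rfl fun i _ => by ring]
      rw [show (∑ s, ∑ p, d k s p * ∑ i, j p i * d s i l)
          = ∑ s, ∑ p, -(∑ i, j i l * d k s p * d s p i) from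
        Finset.sum_congr rfl fun s _ => Finset.sum_congr rfl fun p _ => by
          rw [hH2' s p, mul_neg, Finset.mul_sum, neg_inj]
          exact Finset.sum_congr rfl fun i _ => by ring]
      simp only [Finset.sum_neg_distrib]
      rw [neg_inj, sum_swap12 (fun s p i => j i l * d k s p * d s p i)]
    have hK4 : (∑ s, ∑ i, ∑ p, d s i l * (d s k p * j p i))
        = - ∑ p, ∑ s, ∑ i, j i l * d s k p * d s p i := by
      rw [sum_swap23 (fun s i p => d s i l * (d s k p * j p i))]
      rw [show (∑ s, ∑ p, ∑ i, d s i l * (d s k p * j p i))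
          = ∑ s, ∑ p, d s k p * ∑ i, j p i * d s i l from
        Finset.sum_congr rfl fun s _ => Finset.sum_congr rfl fun p _ => by
          rw [Finset.mul_sum]; exact Finset.sum_congr rfl fun i _ => by ring]
      rw [show (∑ s, ∑ p, d s k p * ∑ i, j p i * d s i l)
          = ∑ s, ∑ p, -(∑ i, j i l * d s k p * d s p i) from
        Finset.sum_congr rfl fun s _ => Finset.sum_congr rfl fun p _ => by
          rw [hH2' s p, mul_neg, Finset.mul_sum, neg_inj]
          exact Finset.sum_congr rfl fun i _ => by ring]
      simp only [Finset.sum_neg_distrib]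
      rw [neg_inj, sum_swap12 (fun s p i => j i l * d s k p * d s p i)]
    rw [hK1, hK2, hK3, hK4] at hsplit
    linarith
  ------------------------------------------------------------------
  rw [h_t1, h_t2, h_t3]
  linarith [h_E2, h_E3]

end key

end LieAux

/-- Proposition 3.2 of the paper, specialized to the flat Euclidean metric:
for an integrable orthogonal complex structure field `J` on `ℝⁿ`, with
`X^p = - J_t^p ∂^s J_s^t`, the Lie derivative of `J` along `X` equals
`Δ J + Q(DJ)` componentwise. -/


theorem lie_deriv_J_eq_laplacian_add_Q {n : ℕ} (hn : 1 ≤ n)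
    (J : EuclideanSpace ℝ (Fin n) → (EuclideanSpace ℝ (Fin n) →L[ℝ] EuclideanSpace ℝ (Fin n)))
    (hC2 : ContDiff ℝ 2 J)
    (hJ2 : ∀ x, (J x).comp (J x) = -ContinuousLinearMap.id ℝ (EuclideanSpace ℝ (Fin n)))
    (hskew : ∀ (x u v : EuclideanSpace ℝ (Fin n)), ⟪J x u, v⟫ = - ⟪u, J x v⟫)
    (hN : ∀ (x u w : EuclideanSpace ℝ (Fin n)),
      fderiv ℝ J x (J x u) w - fderiv ℝ J x (J x w) u
        - J x (fderiv ℝ J x u w) + J x (fderiv ℝ J x w u) = 0) :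
    ∀ (x : EuclideanSpace ℝ (Fin n)) (k l : Fin n),
      -- (L_X J)_k^l = J_p^l ∂_k X^p − J_k^p ∂_p X^l + X^p ∂_p J_k^l
      ((∑ p, Jc J p l x * pd k (Xc J p) x)
          - (∑ p, Jc J k p x * pd p (Xc J l) x)
          + ∑ p, Xc J p x * pd p (Jc J k l) x)
      = -- Δ J_k^l
        (∑ s, pd s (pd s (Jc J k l)) x)
        -- − J_k^p ∂^s J_i^l ∂_p J_s^i
        + (- (∑ p, ∑ s, ∑ i, Jc J k p x * pd s (Jc J i l) x * pd p (Jc J s i) x)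
        -- − J_i^l ∂^s J_k^p ∂_p J_s^i
          - (∑ p, ∑ s, ∑ i, Jc J i l x * pd s (Jc J k p) x * pd p (Jc J s i) x)
        -- + J_s^p ∂^s J_i^l ∂_p J_k^i
          + (∑ p, ∑ s, ∑ i, Jc J s p x * pd s (Jc J i l) x * pd p (Jc J k i) x)
        -- + J_i^l ∂^s J_s^p ∂_p J_k^i
          + (∑ p, ∑ s, ∑ i, Jc J i l x * pd s (Jc J s p) x * pd p (Jc J k i) x)
        -- − J_p^l ∂_k J_t^p ∂^s J_s^t
          - (∑ p, ∑ t, ∑ s, Jc J p l x * pd k (Jc J t p) x * pd s (Jc J s t) x)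
        -- + J_k^p ∂_p J_t^l ∂^s J_s^t
          + (∑ p, ∑ t, ∑ s, Jc J k p x * pd p (Jc J t l) x * pd s (Jc J s t) x)
        -- − J_t^p ∂^s J_s^t ∂_p J_k^l
          - ∑ p, ∑ t, ∑ s, Jc J t p x * pd s (Jc J s t) x * pd p (Jc J k l) x) := by
  intro x k l
  have hXc : ∀ (p : Fin n) (y : EuclideanSpace ℝ (Fin n)),
      Xc J p y = -∑ t, ∑ s, Jc J t p y * pd s (Jc J s t) y := fun _ _ => rfl
  simp only [LieAux.pdXc hC2, hXc]
  exact LieAux.key (fun a b => Jc J a b x) (fun s a b => pd s (Jc J a b) x)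
    (fun s t a b => pd s (pd t (Jc J a b)) x)
    (fun a b => LieAux.H1 hJ2 x a b)
    (fun s a b => LieAux.H2 hC2 hJ2 x s a b)
    (fun a b => LieAux.H3 hskew x a b)
    (fun a b c => LieAux.H4 hC2 hN x a b c)
    (fun s a b c => LieAux.H5 hC2 hN x s a b c)
    (fun s t a b => LieAux.dd_symm hC2 s t a b x) k l
end
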